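/- Let A be a strictly upper triangular n×n complex matrix and let A* denote its conjugate transpose. Then the Frobenius norm of the commutator [A,A*] = AA* - A*A satisfies |[A,A*]| ≥ |A|²/2^(n-1), where |A|² = tr(AA*). -/

import Mathlib

open Matrix
open Finset

/-- The squared Frobenius norm of a complex matrix: `|M|² = tr (M Mᴴ)`. -/
noncomputable def frobNormSq {n : ℕ} (M : Matrix (Fin n) (Fin n) ℂ) : ℝ :=
  (Matrix.trace (M * Mᴴ)).re

lemma frob_eq {n : ℕ} (M : Matrix (Fin n) (Fin n) ℂ) :
    frobNormSq M = ∑ i, ∑ j, Complex.normSq (M i j) := by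
  simp [frobNormSq, Matrix.trace, Matrix.mul_apply, Matrix.diag, Complex.re_sum,
    Matrix.conjTranspose_apply, ← Complex.normSq_eq_norm_sq, Complex.mul_conj]

lemma diag_bound {n : ℕ} (C : Matrix (Fin n) (Fin n) ℂ) (i : Fin n) :
    |(C i i).re| ≤ Real.sqrt (frobNormSq C) := by
  have h1 : (C i i).re ^ 2 ≤ frobNormSq C := by
    rw [frob_eq]
    calc (C i i).re ^ 2 ≤ Complex.normSq (C i i) := by
          rw [Complex.normSq_apply]; nlinarith [sq_nonneg (C i i).im]
    _ ≤ ∑ j, Complex.normSq (C i j) :=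
          Finset.single_le_sum (fun j _ => Complex.normSq_nonneg _) (mem_univ i)
    _ ≤ ∑ i, ∑ j, Complex.normSq (C i j) :=
          Finset.single_le_sum (fun k _ => Finset.sum_nonneg fun j _ => Complex.normSq_nonneg _) (mem_univ i)
  calc |(C i i).re| = Real.sqrt ((C i i).re ^ 2) := (Real.sqrt_sq_eq_abs _).symm
  _ ≤ _ := Real.sqrt_le_sqrt h1

lemma card_gt {n k : ℕ} :
    (Finset.univ.filter (fun i : Fin n => k < i.val)).card = n - (k + 1) := by
  have : (Finset.univ.filter (fun i : Fin n => k < i.val)) =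
      (Finset.Ico (k+1) n).attachFin (fun m hm => (Finset.mem_Ico.mp hm).2) := by
    ext i; simp only [Finset.mem_filter, Finset.mem_univ, true_and, Finset.mem_attachFin, Finset.mem_Ico]; have := i.isLt; omega
  rw [this, Finset.card_attachFin, Nat.card_Ico]

lemma gauss_le_pow (n : ℕ) : (∑ k ∈ Finset.range n, (n - (k+1))) ≤ 2 ^ (n - 1) := by
  have h1 : (∑ k ∈ Finset.range n, (n - (k+1))) = ∑ k ∈ Finset.range n, k := by
    rw [← Finset.sum_range_reflect]
    apply Finset.sum_congr rfl; intro k hk; simp at hk; omega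
  have h2 : (∑ k ∈ Finset.range n, k) * 2 = n * (n-1) := Finset.sum_range_id_mul_two n
  have h3 : ∀ m : ℕ, m * (m - 1) ≤ 2 ^ m := by
    intro m
    induction m with
    | zero => simp
    | succ p ih =>
      rcases Nat.lt_or_ge p 3 with h | h
      · interval_cases p <;> simp
      · obtain ⟨q, rfl⟩ : ∃ q, p = q + 1 := ⟨p - 1, by omega⟩
        have : (q+1+1) * (q+1) ≤ 2 * ((q+1) * (q+1-1)) := by
          simp only [Nat.add_sub_cancel]; nlinarith
        calc (q+1+1) * (q+1+1-1) = (q+1+1)*(q+1) := by simp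
        _ ≤ 2 * ((q+1) * (q+1-1)) := this
        _ ≤ 2 * 2^(q+1) := by omega
        _ = 2 ^ (q+1+1) := by ring
  rcases Nat.eq_zero_or_pos n with h | h
  · simp [h]
  · have h4 : 2 ^ n = 2 * 2 ^ (n-1) := by
      rw [← pow_succ']; congr 1; omega
    have := h3 n
    omega

/-- If `A` is a strictly upper triangular `n × n` complex matrix, then the Frobenius norm of
the commutator `[A, A*] = A Aᴴ - Aᴴ A` satisfies `|[A,A*]| ≥ |A|² / 2^(n-1)`. -/
theorem stmt_0 (n : ℕ) (A : Matrix (Fin n) (Fin n) ℂ)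
    (hA : ∀ i j : Fin n, j ≤ i → A i j = 0) :
    Real.sqrt (frobNormSq (A * Aᴴ - Aᴴ * A)) ≥ frobNormSq A / 2 ^ (n - 1) := by
  set M := Real.sqrt (frobNormSq (A * Aᴴ - Aᴴ * A)) with hM
  have hM0 : 0 ≤ M := Real.sqrt_nonneg _
  set r : Fin n → ℝ := fun i => ∑ j, Complex.normSq (A i j) with hr
  set c : Fin n → ℝ := fun i => ∑ j, Complex.normSq (A j i) with hc
  set f : Fin n → ℝ := fun i => c i - r i with hf
  -- diagonal of the commutator
  have hdiag : ∀ i : Fin n, ((A * Aᴴ - Aᴴ * A) i i).re = r i - c i := by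
    intro i
    simp [Matrix.sub_apply, Matrix.mul_apply, Matrix.conjTranspose_apply, Complex.re_sum,
      Complex.mul_conj, hr, hc, ← Complex.normSq_eq_norm_sq, mul_comm]
  have hfM : ∀ i : Fin n, f i ≤ M := by
    intro i
    have := diag_bound (A * Aᴴ - Aᴴ * A) i
    rw [hdiag i] at this
    have : |r i - c i| ≤ M := this
    have h2 : f i ≤ |r i - c i| := by
      rw [hf]; simp only [abs_sub_comm]
      exact le_abs_self _
    linarith
  set S : ℕ → ℝ := fun k => ∑ i ∈ Finset.univ.filter (fun i : Fin n => k < i.val), f i with hS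
  -- Step A : sum of S k
  have stepA : ∑ k ∈ Finset.range n, S k = ∑ i : Fin n, (i.val : ℝ) * f i := by
    have h1 : ∀ k, S k = ∑ i : Fin n, (if k < i.val then f i else 0) := by
      intro k; rw [hS]; simp [Finset.sum_filter]
    simp only [h1]
    rw [Finset.sum_comm]
    apply Finset.sum_congr rfl
    intro i _
    rw [← Finset.sum_filter]
    have hflt : (Finset.range n).filter (fun k => k < i.val) = Finset.range i.val := by
      ext m; simp; have := i.isLt; omega
    rw [hflt, Finset.sum_const, Finset.card_range, nsmul_eq_mul]
  -- Step B : lower bound by frobNormSq A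
  have stepB : frobNormSq A ≤ ∑ i : Fin n, (i.val : ℝ) * f i := by
    have hsplit : ∑ i : Fin n, (i.val : ℝ) * f i
        = ∑ a : Fin n, ∑ b : Fin n, ((b.val : ℝ) - (a.val : ℝ)) * Complex.normSq (A a b) := by
      have hcc : ∑ i : Fin n, (i.val : ℝ) * c i
          = ∑ a : Fin n, ∑ b : Fin n, (b.val : ℝ) * Complex.normSq (A a b) := by
        simp only [hc, Finset.mul_sum]
        rw [Finset.sum_comm]
      have hrr : ∑ i : Fin n, (i.val : ℝ) * r i
          = ∑ a : Fin n, ∑ b : Fin n, (a.val : ℝ) * Complex.normSq (A a b) := by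
        simp only [hr, Finset.mul_sum]
      simp only [hf, mul_sub, Finset.sum_sub_distrib, hcc, hrr, sub_mul]
    rw [hsplit, frob_eq]
    apply Finset.sum_le_sum
    intro a _
    apply Finset.sum_le_sum
    intro b _
    by_cases h : A a b = 0
    · simp [h]
    · have hab : a < b := by
        by_contra hle
        exact h (hA a b (le_of_not_gt hle))
      have : (1 : ℝ) ≤ (b.val : ℝ) - (a.val : ℝ) := by
        have : a.val + 1 ≤ b.val := hab
        push_cast
        have := Nat.cast_le (α := ℝ).mpr this
        push_cast at this
        linarith
      nlinarith [Complex.normSq_nonneg (A a b)]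
  -- Step C : upper bound of each S k
  have stepC : ∀ k, S k ≤ ((n - (k+1) : ℕ) : ℝ) * M := by
    intro k
    rw [hS]
    calc ∑ i ∈ Finset.univ.filter (fun i : Fin n => k < i.val), f i
        ≤ ∑ _i ∈ Finset.univ.filter (fun i : Fin n => k < i.val), M :=
          Finset.sum_le_sum fun i _ => hfM i
      _ = ((n - (k+1) : ℕ) : ℝ) * M := by
          rw [Finset.sum_const, card_gt, nsmul_eq_mul]
  -- assemble
  have key : frobNormSq A ≤ 2 ^ (n - 1) * M := by
    calc frobNormSq A ≤ ∑ i : Fin n, (i.val : ℝ) * f i := stepB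
      _ = ∑ k ∈ Finset.range n, S k := stepA.symm
      _ ≤ ∑ k ∈ Finset.range n, ((n - (k+1) : ℕ) : ℝ) * M :=
          Finset.sum_le_sum fun k _ => stepC k
      _ = ((∑ k ∈ Finset.range n, (n - (k+1)) : ℕ) : ℝ) * M := by
          rw [← Finset.sum_mul]; push_cast; ring
      _ ≤ 2 ^ (n - 1) * M := by
          apply mul_le_mul_of_nonneg_right _ hM0
          have := gauss_le_pow n
          exact_mod_cast Nat.cast_le.mpr this
  rw [ge_iff_le, div_le_iff₀ (by positivity)]
  linarith [key]
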